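/- Let $\Sigma$ be a fan in $N_\mathbb{R}$ and let $C' \prec C$ be a face of a cone $C \in \Sigma$. The map $O_{C'}(\mathbb{T}) = \mathrm{Hom}((C')^\perp \cap M, \mathbb{R}) \to X_C(\mathbb{T}) = \mathrm{Hom}_{\mathrm{monoid}}(C^\vee \cap M, \mathbb{T})$ sending $p$ to the map that equals $p$ on $(C')^\perp \cap M$ and $\infty$ elsewhere, is a well-defined injection; moreover $X_C(\mathbb{T})$ is the disjoint union $\bigsqcup_{C' \prec C} O_{C'}(\mathbb{T})$ over all faces $C'$ of $C$. -/

import Mathlib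

open scoped Classical

/-- The pairing `⟨m, n⟩ = ∑ i, m i * n i` between `M = ℤ^d` and `N_ℝ = ℝ^d`. -/
def tpair {d : ℕ} (m : Fin d → ℤ) (nn : Fin d → ℝ) : ℝ := ∑ i, (m i : ℝ) * nn i

/-- `C^∨ ∩ M`: the integral points of the dual cone of `C ⊆ N_ℝ`. -/
def dualM {d : ℕ} (C : Set (Fin d → ℝ)) : Set (Fin d → ℤ) :=
  {m | ∀ nn ∈ C, 0 ≤ tpair m nn}

/-- `C'^⊥ ∩ M`: the integral points orthogonal to `C'`. -/
def perpM {d : ℕ} (C' : Set (Fin d → ℝ)) : Set (Fin d → ℤ) :=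
  {m | ∀ nn ∈ C', tpair m nn = 0}

/-- `p : M → 𝕋` is a monoid homomorphism on `S`. -/
def IsTropHomOn {d : ℕ} (S : Set (Fin d → ℤ)) (p : (Fin d → ℤ) → WithTop ℝ) : Prop :=
  p 0 = 0 ∧ ∀ a ∈ S, ∀ b ∈ S, p (a + b) = p a + p b

/-- An element of the tropical torus orbit `O_{C'}(𝕋) = Hom(C'^⊥ ∩ M, ℝ)`,
recorded as a real-valued function which is additive on `C'^⊥ ∩ M`. -/
def IsOrbitElt {d : ℕ} (C' : Set (Fin d → ℝ)) (pr : (Fin d → ℤ) → ℝ) : Prop :=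
  pr 0 = 0 ∧ ∀ a ∈ perpM C', ∀ b ∈ perpM C', pr (a + b) = pr a + pr b

/-- The extension of `p ∈ O_{C'}(𝕋)` to `X_C(𝕋)`: equal to `p` on `C'^⊥ ∩ M`
and `∞` elsewhere. -/
noncomputable def orbitEmb {d : ℕ} (C' : Set (Fin d → ℝ)) (pr : (Fin d → ℤ) → ℝ) :
    (Fin d → ℤ) → WithTop ℝ :=
  fun m => if m ∈ perpM C' then ((pr m : ℝ) : WithTop ℝ) else ⊤

/-- The conic hull of a finite set of integral vectors (a rational polyhedral cone). -/
def coneHullF {d : ℕ} (s : Finset (Fin d → ℤ)) : Set (Fin d → ℝ) :=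
  {x | ∃ c : (Fin d → ℤ) → ℝ, (∀ v, 0 ≤ c v) ∧
    x = ∑ v ∈ s, c v • (fun i => (v i : ℝ))}

/-- `C'` is a face of the cone `C`: it is cut out of `C` by a supporting hyperplane. -/
def IsFace {d : ℕ} (C C' : Set (Fin d → ℝ)) : Prop :=
  ∃ m₀ : Fin d → ℝ, (∀ nn ∈ C, 0 ≤ ∑ i, m₀ i * nn i) ∧
    C' = {nn ∈ C | ∑ i, m₀ i * nn i = 0}

def dotZ {d : ℕ} (m w : Fin d → ℤ) : ℤ := ∑ i, m i * w i
def castF {d : ℕ} (w : Fin d → ℤ) : Fin d → ℝ := fun i => (w i : ℝ)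
def dotR {d : ℕ} (y : Fin d → ℝ) (w : Fin d → ℤ) : ℝ := ∑ i, y i * w i

lemma combo {d : ℕ} (t : Finset (Fin d → ℤ)) (c : (Fin d → ℤ) → ℝ) (y : Fin d → ℝ) :
    ∑ i, y i * (∑ w ∈ t, c w • (fun i => ((w i : ℤ) : ℝ))) i = ∑ w ∈ t, c w * dotR y w := by
  have : ∀ i, (∑ w ∈ t, c w • (fun i => ((w i : ℤ) : ℝ))) i = ∑ w ∈ t, c w * (w i : ℝ) := by
    intro i; rw [Finset.sum_apply]; simp [castF]
  simp_rw [this, Finset.mul_sum, dotR]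
  rw [Finset.sum_comm]
  refine Finset.sum_congr rfl fun w _ => ?_
  rw [Finset.mul_sum]
  exact Finset.sum_congr rfl fun i _ => by ring

lemma dotR_castF {d : ℕ} (m w : Fin d → ℤ) : dotR (castF m) w = (dotZ m w : ℝ) := by
  simp [dotR, dotZ, castF]

lemma tpair_castF {d : ℕ} (m w : Fin d → ℤ) : tpair m (castF w) = (dotZ m w : ℝ) := by
  simp [tpair, dotZ, castF]

lemma tpair_eq_dotRcast {d : ℕ} (m : Fin d → ℤ) (nn : Fin d → ℝ) :
    tpair m nn = ∑ i, (castF m) i * nn i := rfl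

lemma castF_mem_hull {d : ℕ} {t : Finset (Fin d → ℤ)} {w : Fin d → ℤ} (hw : w ∈ t) :
    castF w ∈ coneHullF t := by
  classical
  refine ⟨fun v => if v = w then 1 else 0, fun v => by positivity, ?_⟩
  have : ∀ v ∈ t, (if v = w then (1:ℝ) else 0) • (fun i => ((v i : ℝ))) =
      if v = w then castF w else 0 := by
    intro v hv
    by_cases hvw : v = w <;> simp only [hvw, if_pos, if_neg, one_smul, zero_smul, ite_self]
    · rfl
    · simp [hvw]
  rw [Finset.sum_congr rfl this, Finset.sum_ite_eq' t w fun _ => castF w, if_pos hw]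

lemma hull_mono {d : ℕ} {t₁ t₂ : Finset (Fin d → ℤ)} (h : t₁ ⊆ t₂) :
    coneHullF t₁ ⊆ coneHullF t₂ := by
  rintro x ⟨c, hc, rfl⟩
  classical
  refine ⟨fun v => if v ∈ t₁ then c v else 0, fun v => ?_, ?_⟩
  · by_cases hv : v ∈ t₁ <;> simp [hv, hc v]
  · rw [← Finset.sum_subset h (fun v _ hv => by simp [hv])]
    exact Finset.sum_congr rfl fun v hv => by simp [hv]

lemma tpair_add {d : ℕ} (a b : Fin d → ℤ) (nn : Fin d → ℝ) :
    tpair (a + b) nn = tpair a nn + tpair b nn := by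
  simp only [tpair, ← Finset.sum_add_distrib]
  exact Finset.sum_congr rfl fun i _ => by simp [Pi.add_apply]; push_cast; ring

lemma tpair_zero {d : ℕ} (nn : Fin d → ℝ) : tpair (0 : Fin d → ℤ) nn = 0 := by
  simp [tpair]

lemma tpair_nsmul {d : ℕ} (N : ℕ) (a : Fin d → ℤ) (nn : Fin d → ℝ) :
    tpair (N • a) nn = N * tpair a nn := by
  induction N with
  | zero => simp [tpair_zero]
  | succ n ih => rw [succ_nsmul, tpair_add, ih]; push_cast; ring

lemma dotZ_add {d : ℕ} (a b w : Fin d → ℤ) : dotZ (a + b) w = dotZ a w + dotZ b w := by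
  simp only [dotZ, ← Finset.sum_add_distrib]
  exact Finset.sum_congr rfl fun i _ => by simp [Pi.add_apply]; ring

lemma dotZ_nsmul {d : ℕ} (N : ℕ) (a w : Fin d → ℤ) : dotZ (N • a) w = N * dotZ a w := by
  induction N with
  | zero => simp [dotZ]
  | succ n ih => rw [succ_nsmul, dotZ_add, ih]; push_cast; ring

lemma mem_dualM_hull {d : ℕ} {t : Finset (Fin d → ℤ)} {m : Fin d → ℤ} :
    m ∈ dualM (coneHullF t) ↔ ∀ v ∈ t, 0 ≤ dotZ m v := by
  constructor
  · intro h v hv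
    have := h (castF v) (castF_mem_hull hv)
    rw [tpair_castF] at this
    exact_mod_cast this
  · rintro h x ⟨c, hc, rfl⟩
    rw [tpair_eq_dotRcast, combo]
    apply Finset.sum_nonneg
    intro w hw
    have : (0:ℝ) ≤ dotR (castF m) w := by rw [dotR_castF]; exact_mod_cast h w hw
    exact mul_nonneg (hc w) this

lemma mem_perpM_hull {d : ℕ} {t : Finset (Fin d → ℤ)} {m : Fin d → ℤ} :
    m ∈ perpM (coneHullF t) ↔ ∀ v ∈ t, dotZ m v = 0 := by
  constructor
  · intro h v hv
    have := h (castF v) (castF_mem_hull hv)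
    rw [tpair_castF] at this
    exact_mod_cast this
  · rintro h x ⟨c, hc, rfl⟩
    rw [tpair_eq_dotRcast, combo]
    apply Finset.sum_eq_zero
    intro w hw
    have : dotR (castF m) w = 0 := by rw [dotR_castF]; exact_mod_cast h w hw
    rw [this, mul_zero]

/-- a supporting functional cuts out the sub-hull of generators it kills -/
lemma face_eq_hull {d : ℕ} (s : Finset (Fin d → ℤ)) (y : Fin d → ℝ)
    (hy : ∀ nn ∈ coneHullF s, 0 ≤ ∑ i, y i * nn i) :
    {nn ∈ coneHullF s | ∑ i, y i * nn i = 0} =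
      coneHullF (s.filter fun v => dotR y v = 0) := by
  classical
  ext x
  constructor
  · rintro ⟨⟨c, hc, rfl⟩, hzero⟩
    rw [combo] at hzero
    have hterm : ∀ v ∈ s, 0 ≤ c v * dotR y v := by
      intro v hv
      have : 0 ≤ dotR y v := by
        have := hy (castF v) (castF_mem_hull hv)
        rw [show ∑ i, y i * (castF v) i = dotR y v from rfl] at this
        exact this
      exact mul_nonneg (hc v) this
    have hall := (Finset.sum_eq_zero_iff_of_nonneg hterm).mp hzero
    refine ⟨c, hc, ?_⟩
    rw [← Finset.sum_subset (Finset.filter_subset (fun v => dotR y v = 0) s)]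
    intro v hv hnv
    have hy0 : ¬ dotR y v = 0 := by
      intro h0; exact hnv (Finset.mem_filter.mpr ⟨hv, h0⟩)
    have := hall v hv
    have hcv : c v = 0 := by
      rcases mul_eq_zero.mp this with h | h
      · exact h
      · exact absurd h hy0
    simp [hcv]
  · rintro ⟨c, hc, rfl⟩
    refine ⟨hull_mono (Finset.filter_subset _ s) ⟨c, hc, rfl⟩, ?_⟩
    rw [combo]
    apply Finset.sum_eq_zero
    intro w hw
    rw [(Finset.mem_filter.mp hw).2, mul_zero]

/-- The real solution space of a system of integer linear equations is
spanned by integer solutions. -/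
lemma core {d : ℕ} (L : List (Fin d → ℤ)) :
    ∃ (k : ℕ) (v : Fin k → (Fin d → ℤ)),
      (∀ j, ∀ w ∈ L, dotZ (v j) w = 0) ∧
      (∀ y : Fin d → ℝ, (∀ w ∈ L, dotR y w = 0) →
        ∃ c : Fin k → ℝ, ∀ i, y i = ∑ j, c j * ((v j i : ℤ) : ℝ)) := by
  classical
  induction L with
  | nil =>
    refine ⟨d, fun j => Pi.single j 1, fun j w hw => absurd hw List.not_mem_nil, ?_⟩
    intro y _
    refine ⟨y, fun i => ?_⟩
    have : ∀ j, ((Pi.single j 1 : Fin d → ℤ) i : ℝ) = if j = i then 1 else 0 := by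
      intro j
      by_cases h : j = i
      · subst h; simp
      · simp [Pi.single_apply, h, Ne.symm h]
    simp_rw [this, mul_ite, mul_one, mul_zero]
    rw [Finset.sum_ite_eq' Finset.univ i y, if_pos (Finset.mem_univ i)]
  | cons w L ih =>
    obtain ⟨k, v, hv, hrep⟩ := ih
    by_cases hA : ∀ j, dotZ (v j) w = 0
    · refine ⟨k, v, ?_, ?_⟩
      · intro j w' hw'
        rcases List.mem_cons.mp hw' with h | h
        · subst h; exact hA j
        · exact hv j w' h
      · intro y hy
        exact hrep y fun w' hw' => hy w' (List.mem_cons_of_mem w hw')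
    · push_neg at hA
      obtain ⟨j₀, hj₀⟩ := hA
      set c₀ : ℤ := dotZ (v j₀) w with hc₀
      refine ⟨k, fun j => c₀ • v j - (dotZ (v j) w) • v j₀, ?_, ?_⟩
      · intro j w' hw'
        have expand : dotZ (c₀ • v j - (dotZ (v j) w) • v j₀) w' =
            c₀ * dotZ (v j) w' - (dotZ (v j) w) * dotZ (v j₀) w' := by
          simp only [dotZ, Finset.mul_sum, ← Finset.sum_sub_distrib]
          exact Finset.sum_congr rfl fun i _ => by
            simp [Pi.sub_apply, Pi.smul_apply, smul_eq_mul]; ring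
        rcases List.mem_cons.mp hw' with h | h
        · subst h; rw [expand]; ring
        · rw [expand, hv j w' h, hv j₀ w' h]; ring
      · intro y hy
        obtain ⟨c, hc⟩ := hrep y fun w' hw' => hy w' (List.mem_cons_of_mem w hw')
        have hw0 : dotR y w = 0 := hy w List.mem_cons_self
        have hkey : ∑ j, c j * (dotZ (v j) w : ℝ) = 0 := by
          have heq : dotR y w = ∑ j, c j * (dotZ (v j) w : ℝ) := by
            simp only [dotR]
            simp_rw [hc, Finset.sum_mul]
            rw [Finset.sum_comm]
            refine Finset.sum_congr rfl fun j _ => ?_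
            rw [dotZ]
            push_cast
            rw [Finset.mul_sum]
            exact Finset.sum_congr rfl fun i _ => by ring
          rw [← heq, hw0]
        have hc₀R : ((c₀ : ℤ) : ℝ) ≠ 0 := Int.cast_ne_zero.mpr hj₀
        refine ⟨fun j => c j / (c₀ : ℝ), fun i => ?_⟩
        have expand : ∀ j, (((c₀ • v j - (dotZ (v j) w) • v j₀) i : ℤ) : ℝ) =
            (c₀ : ℝ) * (v j i : ℝ) - (dotZ (v j) w : ℝ) * (v j₀ i : ℝ) := by
          intro j; simp only [Pi.sub_apply, Pi.smul_apply, smul_eq_mul]; push_cast; ring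
        simp_rw [expand]
        have : ∑ j, c j / (c₀:ℝ) * ((c₀:ℝ) * (v j i : ℝ) - (dotZ (v j) w : ℝ) * (v j₀ i : ℝ))
            = ∑ j, (c j * (v j i : ℝ) - (c j * (dotZ (v j) w : ℝ)) * ((v j₀ i : ℝ) / (c₀:ℝ))) := by
          refine Finset.sum_congr rfl fun j _ => ?_
          field_simp
        rw [this, Finset.sum_sub_distrib, ← Finset.sum_mul, hkey, zero_mul, sub_zero, hc i]

lemma dotR_rep {d k : ℕ} (v : Fin k → Fin d → ℤ) (c : Fin k → ℝ) (y : Fin d → ℝ)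
    (hc : ∀ i, y i = ∑ j, c j * ((v j i : ℤ) : ℝ)) (w : Fin d → ℤ) :
    dotR y w = ∑ j, c j * (dotZ (v j) w : ℝ) := by
  simp only [dotR]
  simp_rw [hc, Finset.sum_mul]
  rw [Finset.sum_comm]
  refine Finset.sum_congr rfl fun j _ => ?_
  rw [dotZ]
  push_cast
  rw [Finset.mul_sum]
  exact Finset.sum_congr rfl fun i _ => by ring

lemma dotZ_rep {d k : ℕ} (v : Fin k → Fin d → ℤ) (a : Fin k → ℤ) (w : Fin d → ℤ) :
    dotZ (fun i => ∑ j, a j * v j i) w = ∑ j, a j * dotZ (v j) w := by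
  simp only [dotZ, Finset.sum_mul]
  rw [Finset.sum_comm]
  refine Finset.sum_congr rfl fun j _ => ?_
  rw [Finset.mul_sum]
  exact Finset.sum_congr rfl fun i _ => by ring

/-- A real vector satisfying rational equalities and strict rational
inequalities can be replaced by an integral one. -/
lemma ratpoint {d : ℕ} (t F : Finset (Fin d → ℤ)) (y : Fin d → ℝ)
    (h0 : ∀ w ∈ t, dotR y w = 0) (h1 : ∀ w ∈ F, 0 < dotR y w) :
    ∃ m : Fin d → ℤ, (∀ w ∈ t, dotZ m w = 0) ∧ (∀ w ∈ F, 0 < dotZ m w) := by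
  classical
  obtain ⟨k, v, hv, hrep⟩ := core t.toList
  obtain ⟨c, hc⟩ := hrep y (fun w hw => h0 w (Finset.mem_toList.mp hw))
  set T : (Fin d → ℤ) → ℝ := fun w => ∑ j, |(dotZ (v j) w : ℝ)| with hT
  obtain ⟨D, hD⟩ := exists_nat_gt (∑ w ∈ F, T w / dotR y w)
  have hDw : ∀ w ∈ F, T w < D * dotR y w := by
    intro w hw
    have hpos := h1 w hw
    have hterm : T w / dotR y w ≤ ∑ w' ∈ F, T w' / dotR y w' := by
      apply Finset.single_le_sum (fun w' hw' => ?_) hw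
      exact div_nonneg (Finset.sum_nonneg fun j _ => abs_nonneg _) (le_of_lt (h1 w' hw'))
    have : T w / dotR y w < D := lt_of_le_of_lt hterm hD
    calc T w = T w / dotR y w * dotR y w := by field_simp
    _ < D * dotR y w := by exact mul_lt_mul_of_pos_right this hpos
  set a : Fin k → ℤ := fun j => ⌊(D : ℝ) * c j⌋ with ha
  refine ⟨fun i => ∑ j, a j * v j i, ?_, ?_⟩
  · intro w hw
    rw [dotZ_rep]
    apply Finset.sum_eq_zero
    intro j _
    rw [hv j w (Finset.mem_toList.mpr hw), mul_zero]
  · intro w hw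
    have key : (0:ℝ) < ∑ j, (a j : ℝ) * (dotZ (v j) w : ℝ) := by
      have hper : ∀ j : Fin k, (D:ℝ) * c j * (dotZ (v j) w : ℝ) - |(dotZ (v j) w : ℝ)| ≤
          (a j : ℝ) * (dotZ (v j) w : ℝ) := by
        intro j
        set tj : ℝ := (dotZ (v j) w : ℝ)
        have h1' := Int.floor_le ((D:ℝ) * c j)
        have h2' := Int.lt_floor_add_one ((D:ℝ) * c j)
        have habs : |(a j : ℝ) - (D:ℝ) * c j| ≤ 1 := by
          rw [abs_le]; constructor <;> [linarith; linarith]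
        have hmul : |((a j : ℝ) - (D:ℝ) * c j) * tj| ≤ |tj| := by
          rw [abs_mul]
          exact mul_le_of_le_one_left (abs_nonneg _) habs
        have h3' : -|tj| ≤ ((a j : ℝ) - (D:ℝ) * c j) * tj :=
          le_trans (neg_le_neg hmul) (neg_abs_le _)
        nlinarith [h3']
      have hsum := Finset.sum_le_sum (fun j (_ : j ∈ Finset.univ) => hper j)
      have heq : ∑ j, ((D:ℝ) * c j * (dotZ (v j) w : ℝ) - |(dotZ (v j) w : ℝ)|) =
          (D:ℝ) * dotR y w - T w := by
        rw [Finset.sum_sub_distrib, dotR_rep v c y hc w, Finset.mul_sum, hT]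
        congr 1
        exact Finset.sum_congr rfl fun j _ => by ring
      rw [heq] at hsum
      have := hDw w hw
      linarith
    have : (0:ℝ) < ((∑ j, a j * dotZ (v j) w : ℤ) : ℝ) := by push_cast; exact key
    have hz : (0:ℤ) < ∑ j, a j * dotZ (v j) w := by exact_mod_cast this
    rw [dotZ_rep]
    exact hz

lemma dotZ_sub {d : ℕ} (a b w : Fin d → ℤ) : dotZ (a - b) w = dotZ a w - dotZ b w := by
  simp only [dotZ, ← Finset.sum_sub_distrib]
  exact Finset.sum_congr rfl fun i _ => by simp [Pi.sub_apply]; ring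

lemma dotZ_sum {d : ℕ} {α : Type*} (t : Finset α) (f : α → Fin d → ℤ) (w : Fin d → ℤ) :
    dotZ (∑ u ∈ t, f u) w = ∑ u ∈ t, dotZ (f u) w := by
  unfold dotZ
  simp_rw [Finset.sum_apply, Finset.sum_mul]
  exact Finset.sum_comm

lemma perp_add {d : ℕ} {D : Set (Fin d → ℝ)} {a b : Fin d → ℤ}
    (ha : a ∈ perpM D) (hb : b ∈ perpM D) : a + b ∈ perpM D := by
  intro nn hnn; rw [tpair_add, ha nn hnn, hb nn hnn, add_zero]

lemma perp_nsmul {d : ℕ} {D : Set (Fin d → ℝ)} {a : Fin d → ℤ} (N : ℕ)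
    (ha : a ∈ perpM D) : N • a ∈ perpM D := by
  intro nn hnn; rw [tpair_nsmul, ha nn hnn, mul_zero]

lemma perp_zero {d : ℕ} (D : Set (Fin d → ℝ)) : (0 : Fin d → ℤ) ∈ perpM D :=
  fun nn _ => tpair_zero nn

/-- For a (strongly convex) rational polyhedral cone `C` and a face `C' ≺ C`, the
map `O_{C'}(𝕋) → X_C(𝕋)` extending a homomorphism by `∞` off `C'^⊥ ∩ M` is a
well-defined injection, and `X_C(𝕋)` is the disjoint union of the orbits
`O_{C''}(𝕋)` over all faces `C''` of `C`. -/
theorem stmt5 {d : ℕ} (s : Finset (Fin d → ℤ)) (C : Set (Fin d → ℝ))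
    (hC : C = coneHullF s) (hsc : ∀ x ∈ C, -x ∈ C → x = 0)
    (C' : Set (Fin d → ℝ)) (hface : IsFace C C') :
    (∀ pr, IsOrbitElt C' pr → IsTropHomOn (dualM C) (orbitEmb C' pr)) ∧
    (∀ pr pr', IsOrbitElt C' pr → IsOrbitElt C' pr' →
      orbitEmb C' pr = orbitEmb C' pr' → ∀ m ∈ perpM C', pr m = pr' m) ∧
    (∀ q : (Fin d → ℤ) → WithTop ℝ, IsTropHomOn (dualM C) q →
      ∃ C'' pr, IsFace C C'' ∧ IsOrbitElt C'' pr ∧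
        (∀ m ∈ dualM C, q m = orbitEmb C'' pr m) ∧
        ∀ C₂ pr₂, IsFace C C₂ → IsOrbitElt C₂ pr₂ →
          (∀ m ∈ dualM C, q m = orbitEmb C₂ pr₂ m) → C₂ = C'') := by
  classical
  obtain ⟨mf, hmf_pos, hmf_eq⟩ := hface
  have hC'sub : C' ⊆ C := by rw [hmf_eq]; exact fun nn h => h.1
  refine ⟨?_, ?_, ?_⟩
  · -- Part 1: well-definedness
    rintro pr ⟨hpr0, hpradd⟩
    constructor
    · show (if (0 : Fin d → ℤ) ∈ perpM C' then ((pr 0 : ℝ) : WithTop ℝ) else ⊤) = 0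
      rw [if_pos (perp_zero C'), hpr0]
      rfl
    · intro a ha b hb
      show (if a + b ∈ perpM C' then ((pr (a+b) : ℝ) : WithTop ℝ) else ⊤) =
        (if a ∈ perpM C' then ((pr a : ℝ) : WithTop ℝ) else ⊤) +
        (if b ∈ perpM C' then ((pr b : ℝ) : WithTop ℝ) else ⊤)
      by_cases hab : a ∈ perpM C' ∧ b ∈ perpM C'
      · obtain ⟨ha', hb'⟩ := hab
        rw [if_pos (perp_add ha' hb'), if_pos ha', if_pos hb',
          hpradd a ha' b hb', WithTop.coe_add]
      · have hsum : a + b ∉ perpM C' := by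
          intro hs
          refine hab ⟨fun nn hnn => ?_, fun nn hnn => ?_⟩ <;>
          · have h1 := ha nn (hC'sub hnn)
            have h2 := hb nn (hC'sub hnn)
            have h3 := hs nn hnn
            rw [tpair_add] at h3
            linarith
        rw [if_neg hsum]
        rcases not_and_or.mp hab with h | h
        · rw [if_neg h, top_add]
        · rw [if_neg h, add_top]
  · -- Part 2: injectivity
    rintro pr pr' _ _ heq m hm
    have h := congrFun heq m
    simp only [orbitEmb, if_pos hm] at h
    exact_mod_cast h
  · -- Part 3: surjectivity onto the union of orbits & uniqueness of the face
    rintro q ⟨hq0, hqadd⟩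
    set S : Set (Fin d → ℤ) := {m | m ∈ dualM C ∧ q m ≠ ⊤} with hSdef
    have hS_mem : ∀ m, m ∈ S ↔ (m ∈ dualM C ∧ q m ≠ ⊤) := fun m => Iff.rfl
    have hdual0 : (0 : Fin d → ℤ) ∈ dualM C := fun nn _ => le_of_eq (tpair_zero nn).symm
    have hS0 : (0 : Fin d → ℤ) ∈ S := ⟨hdual0, by rw [hq0]; simp⟩
    have hdual_add : ∀ a b : Fin d → ℤ, a ∈ dualM C → b ∈ dualM C → a + b ∈ dualM C := by
      intro a b ha hb nn hnn
      rw [tpair_add]; exact add_nonneg (ha nn hnn) (hb nn hnn)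
    have hS_add : ∀ a b : Fin d → ℤ, a ∈ S → b ∈ S → a + b ∈ S := by
      rintro a b ⟨ha, ha'⟩ ⟨hb, hb'⟩
      refine ⟨hdual_add a b ha hb, ?_⟩
      rw [hqadd a ha b hb]
      exact WithTop.add_ne_top.mpr ⟨ha', hb'⟩
    have hS_face : ∀ a b : Fin d → ℤ, a ∈ dualM C → b ∈ dualM C → a + b ∈ S → a ∈ S := by
      rintro a b ha hb ⟨_, hne⟩
      refine ⟨ha, fun hat => hne ?_⟩
      rw [hqadd a ha b hb, hat, top_add]
    have hS_nsmul : ∀ (N : ℕ) (m : Fin d → ℤ), m ∈ S → N • m ∈ S := by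
      intro N m hm
      induction N with
      | zero => rw [zero_nsmul]; exact hS0
      | succ n ih => rw [succ_nsmul]; exact hS_add _ _ ih hm
    -- the subset of generators on which every finite element of q vanishes
    set s'' : Finset (Fin d → ℤ) := s.filter (fun v => ∀ m ∈ S, dotZ m v = 0) with hs''def
    have hs''sub : s'' ⊆ s := Finset.filter_subset _ s
    have hdual_gen : ∀ m ∈ S, ∀ v ∈ s, 0 ≤ dotZ m v := by
      intro m hm v hv
      have hmd : m ∈ dualM (coneHullF s) := by rw [← hC]; exact hm.1
      exact mem_dualM_hull.mp hmd v hv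
    have hex : ∀ v, v ∈ s → v ∉ s'' → ∃ m, m ∈ S ∧ 0 < dotZ m v := by
      intro v hv hnv
      have h : ¬ ∀ m ∈ S, dotZ m v = 0 := fun h => hnv (Finset.mem_filter.mpr ⟨hv, h⟩)
      push_neg at h
      obtain ⟨m, hmS, hm0⟩ := h
      exact ⟨m, hmS, lt_of_le_of_ne (hdual_gen m hmS v hv) (Ne.symm hm0)⟩
    set g : (Fin d → ℤ) → (Fin d → ℤ) := fun v =>
      if h : ∃ m, m ∈ S ∧ 0 < dotZ m v then h.choose else 0 with hgdef
    have hgS : ∀ v, g v ∈ S := by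
      intro v
      rw [hgdef]
      by_cases h : ∃ m, m ∈ S ∧ 0 < dotZ m v
      · simp only [dif_pos h]; exact h.choose_spec.1
      · simp only [dif_neg h]; exact hS0
    have hgpos : ∀ v, v ∈ s → v ∉ s'' → 0 < dotZ (g v) v := by
      intro v hv hnv
      have h := hex v hv hnv
      rw [hgdef]
      simp only [dif_pos h]
      exact h.choose_spec.2
    set m₀ : Fin d → ℤ := ∑ v ∈ s \ s'', g v with hm₀def
    have hm₀S : m₀ ∈ S := by
      rw [hm₀def]
      exact Finset.sum_induction g (· ∈ S) hS_add hS0 (fun v _ => hgS v)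
    have hm₀pos : ∀ v, v ∈ s → v ∉ s'' → 1 ≤ dotZ m₀ v := by
      intro v hv hnv
      rw [hm₀def, dotZ_sum]
      have hmem : v ∈ s \ s'' := Finset.mem_sdiff.mpr ⟨hv, hnv⟩
      have h1 : dotZ (g v) v ≤ ∑ u ∈ s \ s'', dotZ (g u) v :=
        Finset.single_le_sum (fun u hu => hdual_gen (g u) (hgS u) v hv) hmem
      have h2 := hgpos v hv hnv
      omega
    have hm₀zero : ∀ v ∈ s'', dotZ m₀ v = 0 := by
      intro v hv
      exact (Finset.mem_filter.mp hv).2 m₀ hm₀S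
    have hSperp : ∀ m ∈ S, m ∈ perpM (coneHullF s'') := by
      intro m hm
      exact mem_perpM_hull.mpr fun v hv => (Finset.mem_filter.mp hv).2 m hm
    -- C'' is a face of C
    have hm₀dual : ∀ nn ∈ C, 0 ≤ ∑ i, castF m₀ i * nn i := by
      intro nn hnn
      exact hm₀S.1 nn hnn
    have hfilter_eq : s.filter (fun v => dotR (castF m₀) v = 0) = s'' := by
      ext v
      simp only [Finset.mem_filter, hs''def]
      constructor
      · rintro ⟨hv, h0⟩
        rw [dotR_castF] at h0
        have h0' : dotZ m₀ v = 0 := by exact_mod_cast h0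
        refine ⟨hv, fun m hm => ?_⟩
        by_contra hne
        have hvn : v ∉ s'' := by
          intro hmem
          exact hne ((Finset.mem_filter.mp hmem).2 m hm)
        have := hm₀pos v hv hvn
        omega
      · rintro ⟨hv, h⟩
        refine ⟨hv, ?_⟩
        rw [dotR_castF]
        exact_mod_cast h m₀ hm₀S
    have hfaceC'' : IsFace C (coneHullF s'') := by
      refine ⟨castF m₀, hm₀dual, ?_⟩
      rw [hC]
      rw [face_eq_hull s (castF m₀) (by rw [← hC]; exact hm₀dual), hfilter_eq]
    -- S is exactly dualM C ∩ perpM C''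
    have hclaimA : ∀ m : Fin d → ℤ, m ∈ S ↔ (m ∈ dualM C ∧ m ∈ perpM (coneHullF s'')) := by
      intro m
      constructor
      · intro hm; exact ⟨hm.1, hSperp m hm⟩
      · rintro ⟨hmd, hmp⟩
        have hv0 : ∀ v ∈ s'', dotZ m v = 0 := mem_perpM_hull.mp hmp
        set N : ℕ := s.sum (fun v => (dotZ m v).toNat) with hNdef
        have hN : ∀ v ∈ s, dotZ m v ≤ (N : ℤ) := by
          intro v hv
          have h1 : dotZ m v ≤ ((dotZ m v).toNat : ℤ) := Int.self_le_toNat _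
          have h2 : (dotZ m v).toNat ≤ N := by
            exact Finset.single_le_sum (f := fun v => (dotZ m v).toNat)
              (fun _ _ => Nat.zero_le _) hv
          omega
        have hsub' : N • m₀ - m ∈ dualM C := by
          rw [hC]
          apply mem_dualM_hull.mpr
          intro v hv
          rw [dotZ_sub, dotZ_nsmul]
          by_cases hv'' : v ∈ s''
          · rw [hm₀zero v hv'', hv0 v hv'']; simp
          · have h1 := hm₀pos v hv hv''
            have h2 := hN v hv
            have h3 : (N:ℤ) * 1 ≤ (N:ℤ) * dotZ m₀ v :=
              mul_le_mul_of_nonneg_left h1 (Int.natCast_nonneg N)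
            omega
        have hsum : m + (N • m₀ - m) = N • m₀ := by abel
        exact hS_face m (N • m₀ - m) hmd hsub'
          (by rw [hsum]; exact hS_nsmul N m₀ hm₀S)
      -- claim B: every element of perpM C'' is a difference of elements of S
    have hclaimB : ∀ m ∈ perpM (coneHullF s''), ∃ a b, a ∈ S ∧ b ∈ S ∧ m = a - b := by
      intro m hmp
      have hv0 : ∀ v ∈ s'', dotZ m v = 0 := mem_perpM_hull.mp hmp
      set N : ℕ := s.sum (fun v => (-(dotZ m v)).toNat) with hNdef
      have hN : ∀ v ∈ s, -(dotZ m v) ≤ (N : ℤ) := by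
        intro v hv
        have h1 : -(dotZ m v) ≤ ((-(dotZ m v)).toNat : ℤ) := Int.self_le_toNat _
        have h2 : (-(dotZ m v)).toNat ≤ N :=
          Finset.single_le_sum (f := fun v => (-(dotZ m v)).toNat)
            (fun _ _ => Nat.zero_le _) hv
        omega
      have haD : m + N • m₀ ∈ dualM C := by
        rw [hC]
        apply mem_dualM_hull.mpr
        intro v hv
        rw [dotZ_add, dotZ_nsmul]
        by_cases hv'' : v ∈ s''
        · rw [hm₀zero v hv'', hv0 v hv'']; simp
        · have h1 := hm₀pos v hv hv''
          have h2 := hN v hv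
          have h3 : (N:ℤ) * 1 ≤ (N:ℤ) * dotZ m₀ v :=
            mul_le_mul_of_nonneg_left h1 (Int.natCast_nonneg N)
          omega
      have haP : m + N • m₀ ∈ perpM (coneHullF s'') :=
        perp_add hmp (perp_nsmul N (hSperp m₀ hm₀S))
      refine ⟨m + N • m₀, N • m₀, (hclaimA _).mpr ⟨haD, haP⟩, hS_nsmul N m₀ hm₀S, by abel⟩
    -- the real part of q
    set r : (Fin d → ℤ) → ℝ := fun m => (q m).untopD 0 with hrdef
    have hr : ∀ m : Fin d → ℤ, q m ≠ ⊤ → q m = ((r m : ℝ) : WithTop ℝ) := by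
      intro m hm
      rcases WithTop.ne_top_iff_exists.mp hm with ⟨x, hx⟩
      rw [← hx, hrdef]
      simp [← hx]
    have hr_zero : r 0 = 0 := by rw [hrdef]; simp [hq0]
    have hr_add : ∀ a b : Fin d → ℤ, a ∈ S → b ∈ S → r (a + b) = r a + r b := by
      intro a b ha hb
      have h1 : q (a + b) = ((r a + r b : ℝ) : WithTop ℝ) := by
        rw [hqadd a ha.1 b hb.1, hr a ha.2, hr b hb.2, WithTop.coe_add]
      have h2 : q (a + b) ≠ ⊤ := (hS_add a b ha hb).2
      have h3 := hr (a + b) h2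
      rw [h1] at h3
      exact_mod_cast h3.symm
    -- well-definedness of differences
    have hWD : ∀ a b a' b' : Fin d → ℤ, a ∈ S → b ∈ S → a' ∈ S → b' ∈ S →
        a - b = a' - b' → r a - r b = r a' - r b' := by
      intro a b a' b' ha hb ha' hb' heq
      have hadd : a + b' = a' + b := sub_eq_sub_iff_add_eq_add.mp heq
      have h1 : q (a + b') = q (a' + b) := by rw [hadd]
      rw [hqadd a ha.1 b' hb'.1, hqadd a' ha'.1 b hb.1, hr a ha.2, hr b' hb'.2,
        hr a' ha'.2, hr b hb.2, ← WithTop.coe_add, ← WithTop.coe_add] at h1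
      have h2 : r a + r b' = r a' + r b := by exact_mod_cast h1
      linarith
    set pr : (Fin d → ℤ) → ℝ := fun m =>
      if h : ∃ p : (Fin d → ℤ) × (Fin d → ℤ), p.1 ∈ S ∧ p.2 ∈ S ∧ m = p.1 - p.2
      then r h.choose.1 - r h.choose.2 else 0 with hprdef
    have hpr_eq : ∀ a b : Fin d → ℤ, a ∈ S → b ∈ S → pr (a - b) = r a - r b := by
      intro a b ha hb
      have hP : ∃ p : (Fin d → ℤ) × (Fin d → ℤ), p.1 ∈ S ∧ p.2 ∈ S ∧ a - b = p.1 - p.2 :=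
        ⟨(a, b), ha, hb, rfl⟩
      rw [hprdef]
      simp only [dif_pos hP]
      exact hWD _ _ a b hP.choose_spec.1 hP.choose_spec.2.1 ha hb hP.choose_spec.2.2.symm
    have hpr_mem : ∀ m ∈ S, pr m = r m := by
      intro m hm
      have := hpr_eq m 0 hm hS0
      rw [sub_zero] at this
      rw [this, hr_zero, sub_zero]
    have horb : IsOrbitElt (coneHullF s'') pr := by
      constructor
      · rw [hpr_mem 0 hS0, hr_zero]
      · intro x hx y hy
        obtain ⟨a, b, ha, hb, hxab⟩ := hclaimB x hx
        obtain ⟨a', b', ha', hb', hyab⟩ := hclaimB y hy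
        have hxy : x + y = (a + a') - (b + b') := by rw [hxab, hyab]; abel
        rw [hxy, hxab, hyab, hpr_eq _ _ (hS_add a a' ha ha') (hS_add b b' hb hb'),
          hpr_eq a b ha hb, hpr_eq a' b' ha' hb', hr_add a a' ha ha', hr_add b b' hb hb']
        ring
    have hagree : ∀ m ∈ dualM C, q m = orbitEmb (coneHullF s'') pr m := by
      intro m hm
      show q m = if m ∈ perpM (coneHullF s'') then ((pr m : ℝ) : WithTop ℝ) else ⊤
      by_cases hmp : m ∈ perpM (coneHullF s'')
      · have hmS : m ∈ S := (hclaimA m).mpr ⟨hm, hmp⟩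
        rw [if_pos hmp, hpr_mem m hmS]
        exact hr m hmS.2
      · rw [if_neg hmp]
        by_contra hne
        exact hmp (hSperp m ⟨hm, hne⟩)
    refine ⟨coneHullF s'', pr, hfaceC'', horb, hagree, ?_⟩
    -- uniqueness of the face
    intro C₂ pr₂ hface₂ horb₂ hagree₂
    obtain ⟨y₂, hy₂pos, hy₂eq⟩ := hface₂
    have hSperp₂ : ∀ m ∈ S, m ∈ perpM C₂ := by
      intro m hm
      by_contra hmp
      have h := hagree₂ m hm.1
      rw [show orbitEmb C₂ pr₂ m = ⊤ from if_neg hmp] at h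
      exact hm.2 h
    have hperpS₂ : ∀ m ∈ dualM C, m ∈ perpM C₂ → m ∈ S := by
      intro m hmd hmp
      refine ⟨hmd, ?_⟩
      rw [hagree₂ m hmd, show orbitEmb C₂ pr₂ m = ((pr₂ m : ℝ) : WithTop ℝ) from if_pos hmp]
      exact WithTop.coe_ne_top
    set s₂ : Finset (Fin d → ℤ) := s.filter (fun v => dotR y₂ v = 0) with hs₂def
    have hC₂hull : C₂ = coneHullF s₂ := by
      rw [hy₂eq, hC]
      exact face_eq_hull s y₂ (by rw [← hC]; exact hy₂pos)
    have hsub1 : s₂ ⊆ s'' := by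
      intro v hv
      obtain ⟨hvs, hv0⟩ := Finset.mem_filter.mp hv
      refine Finset.mem_filter.mpr ⟨hvs, fun m hm => ?_⟩
      have hvC₂ : castF v ∈ C₂ := by rw [hC₂hull]; exact castF_mem_hull hv
      have := hSperp₂ m hm (castF v) hvC₂
      rw [tpair_castF] at this
      exact_mod_cast this
    have hsub2 : s'' ⊆ s₂ := by
      intro v hv
      obtain ⟨hvs, hvall⟩ := Finset.mem_filter.mp hv
      refine Finset.mem_filter.mpr ⟨hvs, ?_⟩
      by_contra hne
      have hvpos : 0 < dotR y₂ v := by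
        have h1 : (0:ℝ) ≤ ∑ i, y₂ i * (castF v) i := hy₂pos (castF v) (by rw [hC]; exact castF_mem_hull hvs)
        exact lt_of_le_of_ne h1 (Ne.symm hne)
      have h0 : ∀ w ∈ s₂, dotR y₂ w = 0 := fun w hw => (Finset.mem_filter.mp hw).2
      have h1 : ∀ w ∈ s \ s₂, 0 < dotR y₂ w := by
        intro w hw
        obtain ⟨hws, hwn⟩ := Finset.mem_sdiff.mp hw
        have hge : (0:ℝ) ≤ ∑ i, y₂ i * (castF w) i :=
          hy₂pos (castF w) (by rw [hC]; exact castF_mem_hull hws)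
        have hne' : dotR y₂ w ≠ 0 := fun h => hwn (Finset.mem_filter.mpr ⟨hws, h⟩)
        exact lt_of_le_of_ne hge (Ne.symm hne')
      obtain ⟨m, hm0, hmpos⟩ := ratpoint s₂ (s \ s₂) y₂ h0 h1
      have hmd : m ∈ dualM C := by
        rw [hC]
        apply mem_dualM_hull.mpr
        intro w hw
        by_cases hw₂ : w ∈ s₂
        · exact le_of_eq (hm0 w hw₂).symm
        · exact le_of_lt (hmpos w (Finset.mem_sdiff.mpr ⟨hw, hw₂⟩))
      have hmp : m ∈ perpM C₂ := by
        rw [hC₂hull]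
        exact mem_perpM_hull.mpr hm0
      have hmS : m ∈ S := hperpS₂ m hmd hmp
      have := hvall m hmS
      have hvsd : v ∈ s \ s₂ := Finset.mem_sdiff.mpr ⟨hvs, fun h => hne (Finset.mem_filter.mp h).2⟩
      have := hmpos v hvsd
      omega
    rw [hC₂hull, Finset.Subset.antisymm hsub1 hsub2]
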